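/- arXiv:2109.00159 — 5 statements merged into one kernel-verified Lean document; each statement's English description precedes it below -/
import Mathlib

section
/- Let X be a Banach space, f : X → X, p̄ ∈ X, and A : X → X a bounded injective linear operator with A∘f mapping X to X. Suppose Y₀ ≥ 0 satisfies ‖A f(p̄)‖ ≤ Y₀, and Z : (0,∞) → (0,∞) satisfies ‖I − A Df(q)‖ ≤ Z(r) for all q with ‖q − p̄‖ ≤ r, where f is Fréchet differentiable. If there exists r₀ > 0 with r₀ Z(r₀) − r₀ + Y₀ < 0, then there is a unique p̃ in the closed ball of radius r₀ about p̄ with f(p̃) = 0. -/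
/-- Newton–Kantorovich type theorem (radii polynomial approach). -/
theorem stmt_5 {X : Type*} [NormedAddCommGroup X] [NormedSpace ℝ X] [CompleteSpace X]
    (f : X → X) (Df : X → X →L[ℝ] X) (hf : ∀ x, HasFDerivAt f (Df x) x)
    (A : X →L[ℝ] X) (hA : Function.Injective A)
    (pbar : X) (Y₀ : ℝ) (hY₀ : 0 ≤ Y₀) (hY : ‖A (f pbar)‖ ≤ Y₀)
    (Z : ℝ → ℝ) (hZpos : ∀ r > (0 : ℝ), 0 < Z r)
    (hZ : ∀ r > (0 : ℝ), ∀ q ∈ Metric.closedBall pbar r,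
      ‖ContinuousLinearMap.id ℝ X - A.comp (Df q)‖ ≤ Z r)
    (r₀ : ℝ) (hr₀ : 0 < r₀) (hrad : r₀ * Z r₀ - r₀ + Y₀ < 0) :
    ∃! p : X, p ∈ Metric.closedBall pbar r₀ ∧ f p = 0 := by
  set T : X → X := fun x => x - A (f x) with hTdef
  have hZr : 0 < Z r₀ := hZpos r₀ hr₀
  have hZlt : Z r₀ < 1 := by nlinarith
  have hTd : ∀ x, HasFDerivAt T (ContinuousLinearMap.id ℝ X - A.comp (Df x)) x := by
    intro x
    exact (hasFDerivAt_id x).sub (A.hasFDerivAt.comp x (hf x))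
  have key : ∀ p ∈ Metric.closedBall pbar r₀, ∀ q ∈ Metric.closedBall pbar r₀,
      ‖T p - T q‖ ≤ Z r₀ * ‖p - q‖ := by
    intro p hp q hq
    exact (convex_closedBall pbar r₀).norm_image_sub_le_of_norm_hasFDerivWithin_le
      (fun x hx => (hTd x).hasFDerivWithinAt)
      (fun x hx => hZ r₀ hr₀ x hx) hq hp
  have hpbar : pbar ∈ Metric.closedBall pbar r₀ := Metric.mem_closedBall_self hr₀.le
  have hmaps : ∀ p ∈ Metric.closedBall pbar r₀, T p ∈ Metric.closedBall pbar r₀ := by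
    intro p hp
    rw [Metric.mem_closedBall, dist_eq_norm]
    have h1 : ‖T p - T pbar‖ ≤ Z r₀ * ‖p - pbar‖ := key p hp pbar hpbar
    have h2 : ‖T pbar - pbar‖ ≤ Y₀ := by
      have : T pbar - pbar = -(A (f pbar)) := by simp [hTdef]
      rw [this, norm_neg]; exact hY
    have hp' : ‖p - pbar‖ ≤ r₀ := by rwa [Metric.mem_closedBall, dist_eq_norm] at hp
    have h3 : T p - pbar = (T p - T pbar) + (T pbar - pbar) := by abel
    calc ‖T p - pbar‖ ≤ ‖T p - T pbar‖ + ‖T pbar - pbar‖ := by rw [h3]; exact norm_add_le _ _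
      _ ≤ Z r₀ * ‖p - pbar‖ + Y₀ := by linarith
      _ ≤ r₀ := by nlinarith
  -- fixed points of T in the ball correspond to zeros of f
  have hfix : ∀ p, T p = p ↔ f p = 0 := by
    intro p
    constructor
    · intro h
      have h' : p - A (f p) = p := h
      have h0 : A (f p) = 0 := sub_eq_self.mp h'
      exact hA (by simpa using h0)
    · intro h; simp [hTdef, h]
  set s := Metric.closedBall pbar r₀
  haveI : Nonempty s := ⟨⟨pbar, hpbar⟩⟩
  haveI : CompleteSpace s := (Metric.isClosed_closedBall.isComplete).completeSpace_coe
  set T' : s → s := fun x => ⟨T x, hmaps x x.2⟩ with hT'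
  set K : NNReal := ⟨Z r₀, hZr.le⟩ with hK
  have hC : ContractingWith K T' := by
    constructor
    · exact_mod_cast hZlt
    · apply LipschitzWith.of_dist_le_mul
      intro x y
      have := key x x.2 y y.2
      simp [Subtype.dist_eq, dist_eq_norm, hK, hT']
      exact this
  refine ⟨(hC.fixedPoint T').1, ⟨(hC.fixedPoint T').2, ?_⟩, ?_⟩
  · have hfp := hC.fixedPoint_isFixedPt (f := T')
    have : T ((hC.fixedPoint T').1) = (hC.fixedPoint T').1 := congrArg Subtype.val hfp
    exact (hfix _).mp this
  · rintro p ⟨hp, hp0⟩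
    have hfp : Function.IsFixedPt T' ⟨p, hp⟩ := by
      apply Subtype.ext
      exact (hfix p).mpr hp0
    have := hC.fixedPoint_unique hfp
    exact congrArg Subtype.val this
end

section
/- Suppose P : 𝔻 → X (𝔻 the closed unit disk in ℂ, X a Banach space) is analytic, λ ∈ ℂ with Re λ > 0, and P satisfies the invariance equation g(P(σ)) = λ σ P'(σ) for all σ ∈ 𝔻, where g : X → X is locally Lipschitz. Then for each σ ∈ 𝔻, the function a(t) := P(e^{λ t} σ), defined for t ≤ 0, solves the differential equation a'(t) = g(a(t)) on (−∞, 0], and a(t) → P(0) as t → −∞. -/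
lemma mem_ball_aux (l : ℂ) (hl : 0 < l.re) (σ : ℂ) (hσ : σ ∈ Metric.closedBall (0 : ℂ) 1)
    (t : ℝ) (ht : t ≤ 0) : Complex.exp (l * (t : ℂ)) * σ ∈ Metric.closedBall (0 : ℂ) 1 := by
  simp only [Metric.mem_closedBall, dist_zero_right] at hσ ⊢
  rw [norm_mul]
  have h1 : ‖Complex.exp (l * (t : ℂ))‖ ≤ 1 := by
    rw [Complex.norm_exp]
    apply Real.exp_le_one_iff.mpr
    simp only [Complex.mul_re, Complex.ofReal_re, Complex.ofReal_im, mul_zero, sub_zero]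
    exact mul_nonpos_of_nonneg_of_nonpos hl.le ht
  calc ‖Complex.exp (l * (t : ℂ))‖ * ‖σ‖ ≤ 1 * 1 :=
        mul_le_mul h1 hσ (norm_nonneg _) zero_le_one
    _ = 1 := one_mul 1

/-- a solution P of the invariance equation conjugates the linear flow on the
disk to the nonlinear flow: t ↦ P(e^{λt}σ) solves a' = g(a) on (−∞,0] and tends to P(0). -/
theorem stmt_6 {X : Type*} [NormedAddCommGroup X] [NormedSpace ℂ X] [CompleteSpace X]
    (P P' : ℂ → X) (g : X → X) (hg : LocallyLipschitz g)
    (l : ℂ) (hl : 0 < l.re)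
    (hP : ∀ σ ∈ Metric.closedBall (0 : ℂ) 1, HasDerivAt P (P' σ) σ)
    (hinv : ∀ σ ∈ Metric.closedBall (0 : ℂ) 1, g (P σ) = (l * σ) • P' σ)
    (σ : ℂ) (hσ : σ ∈ Metric.closedBall (0 : ℂ) 1) :
    (∀ t : ℝ, t ≤ 0 →
      HasDerivAt (fun s : ℝ => P (Complex.exp (l * (s : ℂ)) * σ))
        (g (P (Complex.exp (l * (t : ℂ)) * σ))) t) ∧
    Filter.Tendsto (fun t : ℝ => P (Complex.exp (l * (t : ℂ)) * σ))
      Filter.atBot (nhds (P 0)) := by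
  constructor
  · intro t ht
    have hmem := mem_ball_aux l hl σ hσ t ht
    -- derivative of f : ℝ → ℂ, f s = exp (l s) * σ
    have hf : HasDerivAt (fun s : ℝ => Complex.exp (l * (s : ℂ)) * σ)
        (l * Complex.exp (l * (t : ℂ)) * σ) t := by
      have h1 : HasDerivAt (fun s : ℝ => (l * (s : ℂ))) l t := by
        simpa using ((Complex.ofRealCLM.hasDerivAt (x := t)).const_mul l)
      have h2 : HasDerivAt (fun s : ℝ => Complex.exp (l * (s : ℂ)))
          (Complex.exp (l * (t : ℂ)) * l) t := Complex.hasDerivAt_exp _ |>.scomp t h1 |>.congr_deriv (by rw [smul_eq_mul]; ring)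
      simpa [mul_comm, mul_assoc, mul_left_comm] using h2.mul_const σ
    have hcomp := (hP _ hmem).scomp t hf
    rw [hinv _ hmem]
    convert hcomp using 1
    rfl
    rw [mul_assoc]
  · have h0 : Filter.Tendsto (fun t : ℝ => Complex.exp (l * (t : ℂ)) * σ)
        Filter.atBot (nhds 0) := by
      rw [tendsto_zero_iff_norm_tendsto_zero]
      have : (fun t : ℝ => ‖Complex.exp (l * (t : ℂ)) * σ‖)
          = fun t : ℝ => Real.exp (l.re * t) * ‖σ‖ := by
        funext t
        rw [norm_mul, Complex.norm_exp]
        simp [Complex.mul_re]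
      rw [this]
      have : Filter.Tendsto (fun t : ℝ => Real.exp (l.re * t)) Filter.atBot (nhds 0) := by
        apply Real.tendsto_exp_atBot.comp
        exact Filter.Tendsto.const_mul_atBot hl Filter.tendsto_id
      simpa using this.mul_const ‖σ‖
    exact ((hP 0 (by simp)).continuousAt.tendsto).comp h0
end

section
/- Suppose P : 𝔻 → X is analytic and satisfies g(P(σ)) = λ σ P'(σ) for all σ ∈ 𝔻 with Re λ > 0, where g : X → X is locally Lipschitz with g(ã) = 0 for ã := P(0). Then the image P(𝔻) is contained in the unstable set of ã, i.e., for every σ ∈ 𝔻 there is a solution a of a' = g(a) on (−∞,0] with a(0) = P(σ) and lim_{t→−∞} a(t) = ã. -/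
/-- the image of a solution P of the invariance equation lies in the
unstable set of the equilibrium ã = P(0). -/
theorem stmt_7 {X : Type*} [NormedAddCommGroup X] [NormedSpace ℂ X]
    (P P' : ℂ → X) (g : X → X) (hg : LocallyLipschitz g)
    (l : ℂ) (hl : 0 < l.re)
    (hP : ∀ σ ∈ Metric.closedBall (0 : ℂ) 1, HasDerivAt P (P' σ) σ)
    (hinv : ∀ σ ∈ Metric.closedBall (0 : ℂ) 1, g (P σ) = (l * σ) • P' σ)
    (heqm : g (P 0) = 0) :
    ∀ σ ∈ Metric.closedBall (0 : ℂ) 1, ∃ a : ℝ → X,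
      (∀ t : ℝ, t ≤ 0 → HasDerivAt a (g (a t)) t) ∧ a 0 = P σ ∧
      Filter.Tendsto a Filter.atBot (nhds (P 0)) := by
  intro σ hσ
  set c : ℝ → ℂ := fun t => σ * Complex.exp (l * t) with hc
  have hmem : ∀ t : ℝ, t ≤ 0 → c t ∈ Metric.closedBall (0 : ℂ) 1 := by
    intro t ht
    simp only [Metric.mem_closedBall, Complex.dist_eq, sub_zero] at hσ ⊢
    have h1 : ‖c t‖ = ‖σ‖ * Real.exp (t * l.re) := by
      simp [hc, Complex.norm_exp, mul_comm]
    rw [h1]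
    have h2 : Real.exp (t * l.re) ≤ 1 := by
      rw [Real.exp_le_one_iff]
      exact mul_nonpos_of_nonpos_of_nonneg ht hl.le
    calc ‖σ‖ * Real.exp (t * l.re) ≤ 1 * 1 :=
          mul_le_mul hσ h2 (Real.exp_nonneg _) zero_le_one
      _ = 1 := one_mul 1
  have hcderiv : ∀ t : ℝ, HasDerivAt c (σ * (l * Complex.exp (l * t))) t := by
    intro t
    have h1 : HasDerivAt (fun z : ℂ => Complex.exp (l * z)) (l * Complex.exp (l * t)) (t : ℂ) := by
      have := ((hasDerivAt_id (t : ℂ)).const_mul l).cexp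
      simp only [id, mul_one] at this
      rw [mul_comm l (Complex.exp _)]; exact this
    exact ((h1.comp_ofReal).const_mul σ)
  refine ⟨fun t => P (c t), ?_, ?_, ?_⟩
  · intro t ht
    have hz := hmem t ht
    have hPd := hP (c t) hz
    have h := HasDerivAt.scomp (𝕜 := ℝ) t hPd (hcderiv t)
    rw [hinv (c t) hz]
    have : (l * c t) • P' (c t) = (σ * (l * Complex.exp (l * t))) • P' (c t) := by
      rw [hc]; ring_nf
    rw [this]
    exact h
  · simp [hc]
  · have hc0 : Filter.Tendsto c Filter.atBot (nhds 0) := by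
      rw [tendsto_zero_iff_norm_tendsto_zero]
      have h1 : ∀ t : ℝ, ‖c t‖ = ‖σ‖ * Real.exp (t * l.re) := by
        intro t; simp [hc, Complex.norm_exp, mul_comm]
      simp only [h1]
      have h2 : Filter.Tendsto (fun t : ℝ => t * l.re) Filter.atBot Filter.atBot :=
        Filter.tendsto_atBot_atBot.mpr (fun b => ⟨b / l.re, fun a ha =>
          (le_div_iff₀ hl).mp ha⟩)
      have h3 := Real.tendsto_exp_atBot.comp h2
      simpa using h3.const_mul ‖σ‖
    have hcont : ContinuousAt P 0 := (hP 0 (by simp)).continuousAt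
    exact hcont.tendsto.comp hc0
end

section
/- Let Φ : ℝ₊ × X → X be a semiflow on a complex Banach space X such that for each t ≥ 0 and each continuous linear functional π : X → ℂ, the map z ↦ π(Φ(t, P(z))) is analytic on the open unit disk 𝔻, where P : 𝔻 → X is an analytic parameterization of the local unstable manifold of an equilibrium u₁ with P(0) = u₁. Suppose there exists q₀ ∈ 𝔻 and an open neighborhood U ⊆ 𝔻 of q₀ such that Φ(t, P(q)) → 0 as t → ∞ for all q ∈ U, and u₁ ≠ 0. Then the forward orbit of the image P(𝔻) under Φ is unbounded: there is no constant K with ‖Φ(n, P(z))‖ ≤ K for all n ∈ ℕ and z ∈ 𝔻. -/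
open Metric Filter Complex Topology Real NNReal ENNReal
open Metric Filter Complex Topology Real

/-- Coefficient convergence: if `f n` are continuous on a sphere, uniformly bounded
there, and tend to `0` pointwise on the sphere, the Cauchy power series coefficients
(applied to a fixed vector) tend to `0`. -/
lemma coeff_tendsto {f : ℕ → ℂ → ℂ} {c : ℂ} {r M : ℝ} (hr : 0 < r)
    (hcont : ∀ n, ContinuousOn (f n) (Metric.sphere c r))
    (hM : ∀ n, ∀ z ∈ Metric.sphere c r, ‖f n z‖ ≤ M)
    (hconv : ∀ z ∈ Metric.sphere c r, Tendsto (fun n => f n z) atTop (𝓝 0))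
    (k : ℕ) (w : ℂ) :
    Tendsto (fun n => (cauchyPowerSeries (f n) c r k fun _ => w)) atTop (𝓝 0) := by
  simp only [cauchyPowerSeries_apply]
  have key : Tendsto (fun n => ∮ z in C(c, r), (w / (z - c)) ^ k • (z - c)⁻¹ • f n z)
      atTop (𝓝 0) := by
    have h0 : (0 : ℂ) = ∫ θ in (0)..(2 * π), (0 : ℂ) := by simp
    rw [show (𝓝 (0:ℂ)) = 𝓝 (∫ θ in (0)..(2 * π), (0:ℂ)) by rw [← h0]]
    simp only [circleIntegral]
    apply intervalIntegral.tendsto_integral_filter_of_dominated_convergence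
      (fun _ => r * ((‖w‖ / r) ^ k * (r⁻¹ * M)))
    · -- measurability
      filter_upwards with n
      apply Continuous.aestronglyMeasurable
      have hne : ∀ θ : ℝ, circleMap c r θ - c ≠ 0 := fun θ =>
        sub_ne_zero.mpr (circleMap_ne_center hr.ne')
      have hfc : Continuous fun θ => f n (circleMap c r θ) :=
        (hcont n).comp_continuous (continuous_circleMap c r)
          (fun θ => circleMap_mem_sphere c hr.le θ)
      have hsub : Continuous fun θ : ℝ => circleMap c r θ - c :=
        (continuous_circleMap c r).sub continuous_const
      have hinv : Continuous fun θ : ℝ => (circleMap c r θ - c)⁻¹ :=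
        hsub.inv₀ hne
      have hd : Continuous fun θ => deriv (circleMap c r) θ := by
        simp only [deriv_circleMap]
        exact (continuous_circleMap 0 r).mul continuous_const
      exact hd.smul (((continuous_const.div hsub hne).pow k).smul (hinv.smul hfc))
    · -- bound
      filter_upwards with n
      filter_upwards with θ _
      have hmem : circleMap c r θ ∈ Metric.sphere c r := circleMap_mem_sphere c hr.le θ
      have habs : ‖circleMap c r θ - c‖ = r := by
        rw [circleMap_sub_center]; simp [abs_of_pos hr]
      simp only [norm_smul, deriv_circleMap, norm_mul,
        Complex.norm_I, mul_one, norm_circleMap_zero, abs_of_pos hr]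
      have habs' : ‖circleMap c r θ - c‖ = r := habs
      have h2 : ‖(w / (circleMap c r θ - c)) ^ k‖ = (‖w‖ / r) ^ k := by
        rw [norm_pow, norm_div, habs']
      have h3 : ‖(circleMap c r θ - c)⁻¹‖ = r⁻¹ := by rw [norm_inv, habs']
      rw [h2, h3]
      have h4 : ‖f n (circleMap c r θ)‖ ≤ M := hM n _ hmem
      gcongr
    · exact intervalIntegrable_const
    · -- pointwise limit
      filter_upwards with θ _
      have hmem : circleMap c r θ ∈ Metric.sphere c r := circleMap_mem_sphere c hr.le θ
      have := ((hconv _ hmem).const_smul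
        ((circleMap c r θ - c)⁻¹ : ℂ)).const_smul
        (((w / (circleMap c r θ - c)) ^ k : ℂ))
      have := this.const_smul (deriv (circleMap c r) θ)
      simpa using this
  have := key.const_smul ((2 * Real.pi * Complex.I : ℂ)⁻¹)
  simpa using this

lemma spread_tendsto {f : ℕ → ℂ → ℂ} {M : ℝ} (hM0 : 0 ≤ M)
    (hf : ∀ n, DifferentiableOn ℂ (f n) (Metric.ball 0 1))
    (hM : ∀ n, ∀ z ∈ Metric.ball (0:ℂ) 1, ‖f n z‖ ≤ M)
    {c : ℂ} (hc : c ∈ Metric.ball (0:ℂ) 1) {r : ℝ} (hr : 0 < r)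
    (hsub : Metric.ball c r ⊆ Metric.ball (0:ℂ) 1)
    (hconv : ∀ z ∈ Metric.ball c r, Tendsto (fun n => f n z) atTop (𝓝 0))
    {w : ℂ} (hw : dist w c < 1 - ‖c‖) :
    Tendsto (fun n => f n w) atTop (𝓝 0) := by
  have hcn : ‖c‖ < 1 := by simpa [mem_ball, dist_eq_norm] using hc
  set y : ℂ := w - c with hy
  have hyn : ‖y‖ < 1 - ‖c‖ := by rwa [hy, ← dist_eq_norm]
  have hynn : 0 ≤ ‖y‖ := norm_nonneg y
  set ρ : ℝ := (‖y‖ + (1 - ‖c‖)) / 2 with hρ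
  have hρpos : 0 < ρ := by rw [hρ]; linarith
  have hyρ : ‖y‖ < ρ := by rw [hρ]; linarith
  have hρlt : ρ < 1 - ‖c‖ := by rw [hρ]; linarith
  have hρeq : ((ρ.toNNReal : ℝ≥0) : ℝ) = ρ := Real.coe_toNNReal ρ hρpos.le
  have hclosed : Metric.closedBall c ρ ⊆ Metric.ball (0:ℂ) 1 := by
    intro x hx
    rw [mem_closedBall, dist_eq_norm] at hx
    rw [mem_ball, dist_eq_norm, sub_zero]
    calc ‖x‖ = ‖(x - c) + c‖ := by ring_nf
    _ ≤ ‖x - c‖ + ‖c‖ := norm_add_le _ _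
    _ ≤ ρ + ‖c‖ := by linarith
    _ < 1 := by linarith
  set ρ' : ℝ := min (r / 2) ρ with hρ'
  have hρ'pos : 0 < ρ' := lt_min (by linarith) hρpos
  have hρ'eq : ((ρ'.toNNReal : ℝ≥0) : ℝ) = ρ' := Real.coe_toNNReal ρ' hρ'pos.le
  have hsphere : Metric.sphere c ρ' ⊆ Metric.ball c r := by
    intro x hx
    rw [mem_sphere] at hx
    rw [mem_ball, hx]
    calc ρ' ≤ r / 2 := min_le_left _ _
    _ < r := by linarith
  set p : ℕ → FormalMultilinearSeries ℂ ℂ ℂ := fun n => cauchyPowerSeries (f n) c ρ with hp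
  set q : ℕ → FormalMultilinearSeries ℂ ℂ ℂ := fun n => cauchyPowerSeries (f n) c ρ' with hq
  have hps : ∀ n, HasFPowerSeriesOnBall (f n) (p n) c (ρ.toNNReal : ℝ≥0) := by
    intro n
    have h := ((hf n).mono (by rw [hρeq]; exact hclosed)).hasFPowerSeriesOnBall
      (Real.toNNReal_pos.mpr hρpos)
    rw [hρeq] at h
    exact h
  have hqs : ∀ n, HasFPowerSeriesOnBall (f n) (q n) c (ρ'.toNNReal : ℝ≥0) := by
    intro n
    have hsub' : Metric.closedBall c ρ' ⊆ Metric.ball (0:ℂ) 1 :=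
      subset_trans (Metric.closedBall_subset_closedBall (min_le_right _ _)) hclosed
    have h := ((hf n).mono (by rw [hρ'eq]; exact hsub')).hasFPowerSeriesOnBall
      (Real.toNNReal_pos.mpr hρ'pos)
    rw [hρ'eq] at h
    exact h
  have hpq : ∀ n, p n = q n := fun n =>
    (hps n).hasFPowerSeriesAt.eq_formalMultilinearSeries (hqs n).hasFPowerSeriesAt
  have hsphereρ : Metric.sphere c ρ ⊆ Metric.ball (0:ℂ) 1 :=
    subset_trans Metric.sphere_subset_closedBall hclosed
  have hcoeff : ∀ n k, ‖p n k‖ ≤ M * ρ⁻¹ ^ k := by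
    intro n k
    refine (norm_cauchyPowerSeries_le (f n) c ρ k).trans ?_
    rw [abs_of_pos hρpos]
    gcongr
    calc (2 * π)⁻¹ * ∫ θ in (0:ℝ)..2 * π, ‖f n (circleMap c ρ θ)‖
        ≤ (2 * π)⁻¹ * ∫ _θ in (0:ℝ)..2 * π, M := by
          refine mul_le_mul_of_nonneg_left ?_ (by positivity)
          refine intervalIntegral.integral_mono_on two_pi_pos.le ?_ intervalIntegrable_const ?_
          · apply ContinuousOn.intervalIntegrable
            apply Continuous.continuousOn
            apply Continuous.norm
            exact ((hf n).continuousOn.mono hsphereρ).comp_continuous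
              (continuous_circleMap c ρ) (fun θ => circleMap_mem_sphere c hρpos.le θ)
          · intro θ _
            exact hM n _ (hsphereρ (circleMap_mem_sphere c hρpos.le θ))
    _ = M := by
          rw [intervalIntegral.integral_const, smul_eq_mul, sub_zero, ← mul_assoc,
            inv_mul_cancel₀ (by positivity : (2:ℝ) * π ≠ 0), one_mul]
  have hymem : y ∈ Metric.eball (0:ℂ) (ρ.toNNReal : ℝ≥0∞) := by
    rw [Metric.emetric_ball_nnreal, hρeq, mem_ball, dist_zero_right]
    exact hyρ
  have hsum : ∀ n, HasSum (fun k => p n k fun _ => y) (f n w) := by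
    intro n
    have h := (hps n).hasSum hymem
    rwa [show c + y = w by rw [hy]; ring] at h
  -- bound on terms
  set a : ℝ := ‖y‖ / ρ with ha
  have ha0 : 0 ≤ a := by positivity
  have ha1 : a < 1 := by rw [ha, div_lt_one hρpos]; exact hyρ
  have hterm : ∀ n k, ‖p n k fun _ => y‖ ≤ M * a ^ k := by
    intro n k
    calc ‖p n k fun _ => y‖ ≤ ‖p n k‖ * ∏ _i : Fin k, ‖y‖ :=
        (p n k).le_opNorm _
    _ = ‖p n k‖ * ‖y‖ ^ k := by rw [Finset.prod_const]; simp
    _ ≤ (M * ρ⁻¹ ^ k) * ‖y‖ ^ k := by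
        gcongr
        exact hcoeff n k
    _ = M * a ^ k := by rw [ha, div_pow, inv_pow, div_eq_mul_inv]; ring
  -- conclude
  rw [NormedAddCommGroup.tendsto_nhds_zero]
  intro ε hε
  have htail : Tendsto (fun K : ℕ => M * a ^ K / (1 - a)) atTop (𝓝 0) := by
    have h1 := (tendsto_pow_atTop_nhds_zero_of_lt_one ha0 ha1).const_mul M
    have h2 := h1.div_const (1 - a)
    simpa using h2
  obtain ⟨K, hK⟩ := (htail.eventually (gt_mem_nhds (half_pos hε))).exists
  have hpartk : ∀ k, Tendsto (fun n => (p n k fun _ => y)) atTop (𝓝 0) := by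
    intro k
    have hcontS : ∀ n, ContinuousOn (f n) (Metric.sphere c ρ') := fun n =>
      (hf n).continuousOn.mono (subset_trans hsphere hsub)
    have hMS : ∀ n, ∀ z ∈ Metric.sphere c ρ', ‖f n z‖ ≤ M := fun n z hz =>
      hM n z (hsub (hsphere hz))
    have hconvS : ∀ z ∈ Metric.sphere c ρ', Tendsto (fun n => f n z) atTop (𝓝 0) :=
      fun z hz => hconv z (hsphere hz)
    have h := coeff_tendsto hρ'pos hcontS hMS hconvS k y
    have heqq : (fun n => (p n k fun _ => y)) =
        fun n => (cauchyPowerSeries (f n) c ρ' k fun _ => y) := by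
      funext n; rw [hpq n]
    rw [heqq]
    exact h
  have hpart : Tendsto (fun n => ∑ k ∈ Finset.range K, (p n k fun _ => y)) atTop (𝓝 0) := by
    have := tendsto_finset_sum (Finset.range K) (fun k _ => hpartk k)
    simpa using this
  have hKbound : ∀ n, ‖f n w - ∑ k ∈ Finset.range K, (p n k fun _ => y)‖ ≤
      M * a ^ K / (1 - a) := by
    intro n
    have hsummable : Summable (fun k => p n k fun _ => y) := (hsum n).summable
    have heq2 : f n w - ∑ k ∈ Finset.range K, (p n k fun _ => y) =
        ∑' i, (p n (i + K) fun _ => y) := by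
      rw [← (hsum n).tsum_eq, ← Summable.sum_add_tsum_nat_add K hsummable]
      ring
    rw [heq2]
    have hgeom : Summable (fun i : ℕ => M * a ^ (i + K)) := by
      have h1 : Summable (fun i : ℕ => (M * a ^ K) * a ^ i) :=
        (summable_geometric_of_lt_one ha0 ha1).mul_left _
      have h2 : (fun i : ℕ => M * a ^ (i + K)) = fun i : ℕ => (M * a ^ K) * a ^ i := by
        funext i; rw [pow_add]; ring
      rw [h2]
      exact h1
    have hsum_norm : Summable fun i => ‖p n (i + K) fun _ => y‖ :=
      Summable.of_nonneg_of_le (fun i => norm_nonneg _) (fun i => hterm n (i + K)) hgeom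
    calc ‖∑' i, (p n (i + K) fun _ => y)‖ ≤ ∑' i, ‖p n (i + K) fun _ => y‖ :=
        norm_tsum_le_tsum_norm hsum_norm
    _ ≤ ∑' i, M * a ^ (i + K) := Summable.tsum_le_tsum (fun i => hterm n (i + K)) hsum_norm hgeom
    _ = M * a ^ K / (1 - a) := by
        have h2 : (fun i : ℕ => M * a ^ (i + K)) = fun i : ℕ => (M * a ^ K) * a ^ i := by
          funext i; rw [pow_add]; ring
        rw [h2, _root_.tsum_mul_left, tsum_geometric_of_lt_one ha0 ha1, div_eq_mul_inv]
  filter_upwards [(NormedAddCommGroup.tendsto_nhds_zero.mp hpart) (ε / 2) (half_pos hε)]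
    with n hn
  calc ‖f n w‖ = ‖(f n w - ∑ k ∈ Finset.range K, (p n k fun _ => y)) +
      ∑ k ∈ Finset.range K, (p n k fun _ => y)‖ := by rw [sub_add_cancel]
  _ ≤ ‖f n w - ∑ k ∈ Finset.range K, (p n k fun _ => y)‖ +
      ‖∑ k ∈ Finset.range K, (p n k fun _ => y)‖ := norm_add_le _ _
  _ < M * a ^ K / (1 - a) + ε / 2 := add_lt_add_of_le_of_lt (hKbound n) hn
  _ < ε := by linarith

/-- forcing argument: if a semiflow has analytic projected time-t maps along
an analytic parameterization P of the unstable manifold of an equilibrium u₁ ≠ 0, and an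
open set of points of P(𝔻) is heteroclinic to 0, then the forward orbit of P(𝔻) cannot be
uniformly bounded. -/
theorem stmt_15 {X : Type*} [NormedAddCommGroup X] [NormedSpace ℂ X]
    (Φ : ℝ → X → X) (P : ℂ → X) (u₁ : X)
    (hP0 : P 0 = u₁) (hu₁ : u₁ ≠ 0)
    (hequil : ∀ t : ℝ, 0 ≤ t → Φ t u₁ = u₁)
    (hanal : ∀ t : ℝ, 0 ≤ t → ∀ pl : X →L[ℂ] ℂ,
      DifferentiableOn ℂ (fun z => pl (Φ t (P z))) (Metric.ball 0 1))
    (U : Set ℂ) (hUo : IsOpen U) (hUne : U.Nonempty) (hUsub : U ⊆ Metric.ball 0 1)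
    (hhet : ∀ q ∈ U, Filter.Tendsto (fun t => Φ t (P q)) Filter.atTop (nhds 0)) :
    ¬ ∃ K : ℝ, ∀ n : ℕ, ∀ z ∈ Metric.ball (0 : ℂ) 1, ‖Φ n (P z)‖ ≤ K := by
  rintro ⟨K, hK⟩
  obtain ⟨pl, hpl1, hplu⟩ := exists_dual_vector ℂ u₁ (norm_ne_zero_iff.mpr hu₁)
  set f : ℕ → ℂ → ℂ := fun n z => pl (Φ n (P z)) with hf
  have hfd : ∀ n, DifferentiableOn ℂ (f n) (Metric.ball 0 1) := fun n =>
    hanal n (Nat.cast_nonneg n) pl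
  have hM0 : (0:ℝ) ≤ max K 0 := le_max_right _ _
  have hfM : ∀ n, ∀ z ∈ Metric.ball (0:ℂ) 1, ‖f n z‖ ≤ max K 0 := by
    intro n z hz
    calc ‖pl (Φ n (P z))‖ ≤ ‖pl‖ * ‖Φ n (P z)‖ := pl.le_opNorm _
    _ = ‖Φ n (P z)‖ := by rw [hpl1, one_mul]
    _ ≤ K := hK n z hz
    _ ≤ max K 0 := le_max_left _ _
  have hconvU : ∀ q ∈ U, Tendsto (fun n : ℕ => f n q) atTop (𝓝 0) := by
    intro q hq
    have h1 : Tendsto (fun t : ℝ => pl (Φ t (P q))) atTop (𝓝 (pl 0)) :=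
      (pl.continuous.tendsto 0).comp (hhet q hq)
    have h2 := h1.comp tendsto_natCast_atTop_atTop
    rw [map_zero] at h2; exact h2
  -- the set where convergence holds on a neighborhood
  set T : Set ℂ := {z | z ∈ Metric.ball (0:ℂ) 1 ∧ ∃ ρ > 0, Metric.ball z ρ ⊆ Metric.ball (0:ℂ) 1 ∧
    ∀ w ∈ Metric.ball z ρ, Tendsto (fun n => f n w) atTop (𝓝 0)} with hT
  -- spreading step
  have hstep : ∀ z ∈ T, ∀ w : ℂ, dist w z < 1 - ‖z‖ → w ∈ T := by
    rintro z ⟨hz1, ρ, hρ, hρsub, hρconv⟩ w hw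
    have hzn : ‖z‖ < 1 := by simpa [mem_ball, dist_eq_norm] using hz1
    have hwn : ‖w‖ < 1 := by
      have : ‖w - z‖ < 1 - ‖z‖ := by rwa [← dist_eq_norm]
      calc ‖w‖ = ‖(w - z) + z‖ := by ring_nf
      _ ≤ ‖w - z‖ + ‖z‖ := norm_add_le _ _
      _ < 1 := by linarith
    refine ⟨by simpa [mem_ball, dist_eq_norm] using hwn, (1 - ‖z‖ - dist w z) / 2, by linarith, ?_, ?_⟩
    · intro x hx
      rw [mem_ball] at hx
      have : dist x z < 1 - ‖z‖ := by
        calc dist x z ≤ dist x w + dist w z := dist_triangle _ _ _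
        _ < 1 - ‖z‖ := by linarith
      rw [mem_ball, dist_eq_norm, sub_zero]
      rw [dist_eq_norm] at this
      calc ‖x‖ = ‖(x - z) + z‖ := by ring_nf
      _ ≤ ‖x - z‖ + ‖z‖ := norm_add_le _ _
      _ < 1 := by linarith
    · intro x hx
      rw [mem_ball] at hx
      have hxz : dist x z < 1 - ‖z‖ := by
        calc dist x z ≤ dist x w + dist w z := dist_triangle _ _ _
        _ < 1 - ‖z‖ := by linarith
      exact spread_tendsto hM0 hfd hfM hz1 hρ hρsub hρconv hxz
  -- T is nonempty
  obtain ⟨q₀, hq₀⟩ := hUne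
  obtain ⟨r, hr, hball⟩ := Metric.isOpen_iff.mp hUo q₀ hq₀
  have hq₀T : q₀ ∈ T := by
    refine ⟨hUsub hq₀, r, hr, subset_trans hball hUsub, fun w hw => hconvU w (hball hw)⟩
  -- T is open
  have hTopen : IsOpen T := by
    rw [Metric.isOpen_iff]
    rintro z ⟨hz1, ρ, hρ, hρsub, hρconv⟩
    refine ⟨min ρ (1 - ‖z‖), ?_, ?_⟩
    · have hzn : ‖z‖ < 1 := by simpa [mem_ball, dist_eq_norm] using hz1
      exact lt_min hρ (by linarith)
    · intro w hw
      rw [mem_ball] at hw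
      exact hstep z ⟨hz1, ρ, hρ, hρsub, hρconv⟩ w (hw.trans_le (min_le_right _ _))
  -- closure step : points of the unit ball in the closure of T lie in T
  have hclo : ∀ x ∈ Metric.ball (0:ℂ) 1, x ∈ closure T → x ∈ T := by
    intro x hx hxc
    have hxn : ‖x‖ < 1 := by simpa [mem_ball, dist_eq_norm] using hx
    set ε : ℝ := (1 - ‖x‖) / 3 with hε
    have hεpos : 0 < ε := by rw [hε]; linarith
    obtain ⟨z, hzT, hzx⟩ := Metric.mem_closure_iff.mp hxc ε hεpos
    have hzn : ‖z‖ ≤ ‖x‖ + ε := by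
      calc ‖z‖ = ‖x + (z - x)‖ := by ring_nf
      _ ≤ ‖x‖ + ‖z - x‖ := norm_add_le _ _
      _ ≤ ‖x‖ + ε := by
          rw [norm_sub_rev, ← dist_eq_norm]
          linarith [hzx]
    refine hstep z hzT x ?_
    have h3 : 1 - ‖z‖ ≥ 2 * ε := by rw [hε] at *; linarith
    linarith
  -- connectedness: the unit ball is contained in T
  have hconn : IsPreconnected (Metric.ball (0:ℂ) 1) := (convex_ball (0:ℂ) 1).isPreconnected
  have hsubT : Metric.ball (0:ℂ) 1 ⊆ T := by
    intro x hx
    by_contra hxT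
    -- x ∉ closure T, else hclo applies
    have hxc : x ∉ closure T := fun h => hxT (hclo x hx h)
    -- apply preconnectedness with u = T, v = (closure T)ᶜ
    have hcover : Metric.ball (0:ℂ) 1 ⊆ T ∪ (closure T)ᶜ := by
      intro w hw
      by_cases hwc : w ∈ closure T
      · exact Or.inl (hclo w hw hwc)
      · exact Or.inr hwc
    have h1 : (Metric.ball (0:ℂ) 1 ∩ T).Nonempty := ⟨q₀, hUsub hq₀, hq₀T⟩
    have h2 : (Metric.ball (0:ℂ) 1 ∩ (closure T)ᶜ).Nonempty := ⟨x, hx, hxc⟩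
    have h3 := hconn T (closure T)ᶜ hTopen isClosed_closure.isOpen_compl hcover h1 h2
    obtain ⟨w, _, hwT, hwc⟩ := h3
    exact hwc (subset_closure hwT)
  -- 0 ∈ T gives the contradiction
  have h0T : (0:ℂ) ∈ T := hsubT (Metric.mem_ball_self one_pos)
  obtain ⟨_, ρ, hρ, _, hρconv⟩ := h0T
  have hzero : Tendsto (fun n => f n 0) atTop (𝓝 0) :=
    hρconv 0 (Metric.mem_ball_self hρ)
  have hconst : ∀ n : ℕ, f n 0 = (‖u₁‖ : ℂ) := by
    intro n
    rw [hf]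
    simp only
    rw [hP0, hequil n (Nat.cast_nonneg n), hplu]
    rfl
  rw [show (fun n => f n 0) = fun _ : ℕ => (‖u₁‖ : ℂ) from funext hconst] at hzero
  have : (‖u₁‖ : ℂ) = 0 := tendsto_nhds_unique tendsto_const_nhds hzero
  exact hu₁ (norm_eq_zero.mp (by exact_mod_cast this))
end

section
/- If there exists one heteroclinic orbit u_a(t) of u_t = e^{iθ}(u_{xx}+u²) (period-1 periodic boundary conditions) from a nontrivial equilibrium u₁ to 0, then for each n ∈ ℤ, n ≠ 0, the rescaled function u_n(t,x) := n² u_a(n²t, nx) is a heteroclinic orbit from the nontrivial equilibrium n²u₁(nx) to 0. Consequently, existence of one heteroclinic connection implies the existence of countably infinitely many heteroclinic connections between distinct pairs of equilibria of arbitrarily large norm. -/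
lemma deriv_scale (f : ℝ → ℂ) (hf : Differentiable ℝ f) (c : ℂ) (a : ℝ) (x : ℝ) :
    deriv (fun y => c * f (a * y)) x = c * a * deriv f (a * x) := by
  have h1 : HasDerivAt (fun y : ℝ => a * y) a x := by
    simpa using (hasDerivAt_id x).const_mul a
  have h2 : HasDerivAt (fun y => f (a * y)) (a • deriv f (a * x)) x :=
    ((hf (a * x)).hasDerivAt).scomp x h1
  have h3 := h2.const_mul c
  rw [h3.deriv, Complex.real_smul]
  ring

lemma deriv2_scale (f : ℝ → ℂ) (hf : Differentiable ℝ f) (hf' : Differentiable ℝ (deriv f))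
    (c : ℂ) (a : ℝ) (x : ℝ) :
    deriv (deriv (fun y => c * f (a * y))) x = c * a * a * deriv (deriv f) (a * x) := by
  have h1 : deriv (fun y => c * f (a * y)) = fun y => (c * a) * deriv f (a * y) :=
    funext fun y => deriv_scale f hf c a y
  rw [h1, deriv_scale (deriv f) hf' (c * a) a x]

/-- rescaling a heteroclinic orbit from u₁ to 0 gives, for each n ≠ 0, a
heteroclinic orbit from the rescaled equilibrium n²u₁(n·) to 0. -/
theorem stmt_17 (θ : ℝ) (u₁ : ℝ → ℂ) (ua : ℝ → ℝ → ℂ)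
    (hu1 : Differentiable ℝ u₁) (hu1' : Differentiable ℝ (deriv u₁))
    (ht : ∀ x, Differentiable ℝ fun t => ua t x)
    (hx1 : ∀ t, Differentiable ℝ (ua t))
    (hx2 : ∀ t, Differentiable ℝ (deriv (ua t)))
    (hper : ∀ t x, ua t (x + 1) = ua t x)
    (hpde : ∀ t x, deriv (fun s => ua s x) t
      = Complex.exp (θ * Complex.I) * (deriv (deriv (ua t)) x + (ua t x) ^ 2))
    (hequil : ∀ x, deriv (deriv u₁) x + (u₁ x) ^ 2 = 0)
    (hlimm : ∀ x, Filter.Tendsto (fun t => ua t x) Filter.atBot (nhds (u₁ x)))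
    (hlimp : ∀ x, Filter.Tendsto (fun t => ua t x) Filter.atTop (nhds 0))
    (n : ℤ) (hn : n ≠ 0) :
    (∀ x, deriv (deriv (fun y => (n : ℂ) ^ 2 * u₁ ((n : ℝ) * y))) x
        + ((n : ℂ) ^ 2 * u₁ ((n : ℝ) * x)) ^ 2 = 0) ∧
    (∀ t x, deriv (fun s => (n : ℂ) ^ 2 * ua ((n : ℝ) ^ 2 * s) ((n : ℝ) * x)) t
      = Complex.exp (θ * Complex.I) *
          (deriv (deriv (fun y => (n : ℂ) ^ 2 * ua ((n : ℝ) ^ 2 * t) ((n : ℝ) * y))) x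
            + ((n : ℂ) ^ 2 * ua ((n : ℝ) ^ 2 * t) ((n : ℝ) * x)) ^ 2)) ∧
    (∀ t x, (n : ℂ) ^ 2 * ua ((n : ℝ) ^ 2 * t) ((n : ℝ) * (x + 1))
      = (n : ℂ) ^ 2 * ua ((n : ℝ) ^ 2 * t) ((n : ℝ) * x)) ∧
    (∀ x, Filter.Tendsto (fun t => (n : ℂ) ^ 2 * ua ((n : ℝ) ^ 2 * t) ((n : ℝ) * x))
      Filter.atBot (nhds ((n : ℂ) ^ 2 * u₁ ((n : ℝ) * x)))) ∧
    (∀ x, Filter.Tendsto (fun t => (n : ℂ) ^ 2 * ua ((n : ℝ) ^ 2 * t) ((n : ℝ) * x))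
      Filter.atTop (nhds 0)) := by
  have hnR : (n : ℝ) ≠ 0 := Int.cast_ne_zero.mpr hn
  have hpos : (0 : ℝ) < (n : ℝ) ^ 2 := by positivity
  have hbB : Filter.Tendsto (fun t : ℝ => (n : ℝ) ^ 2 * t) Filter.atBot Filter.atBot :=
    Filter.Tendsto.const_mul_atBot hpos Filter.tendsto_id
  have hbT : Filter.Tendsto (fun t : ℝ => (n : ℝ) ^ 2 * t) Filter.atTop Filter.atTop :=
    Filter.Tendsto.const_mul_atTop hpos Filter.tendsto_id
  refine ⟨?_, ?_, ?_, ?_, ?_⟩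
  · intro x
    rw [deriv2_scale u₁ hu1 hu1' ((n : ℂ) ^ 2) (n : ℝ) x]
    have h := hequil ((n : ℝ) * x)
    push_cast
    linear_combination ((n : ℂ) ^ 4) * h
  · intro t x
    have hT : deriv (fun s => (n : ℂ) ^ 2 * ua ((n : ℝ) ^ 2 * s) ((n : ℝ) * x)) t
        = (n : ℂ) ^ 2 * ((n : ℝ) ^ 2 : ℝ) * deriv (fun s => ua s ((n : ℝ) * x)) ((n : ℝ) ^ 2 * t) :=
      deriv_scale (fun s => ua s ((n : ℝ) * x)) (ht _) ((n : ℂ) ^ 2) ((n : ℝ) ^ 2) t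
    rw [hT, hpde ((n : ℝ) ^ 2 * t) ((n : ℝ) * x),
      deriv2_scale (ua ((n : ℝ) ^ 2 * t)) (hx1 _) (hx2 _) ((n : ℂ) ^ 2) (n : ℝ) x]
    push_cast
    ring
  · intro t x
    have hp : Function.Periodic (ua ((n : ℝ) ^ 2 * t)) 1 := hper _
    have h := (hp.int_mul n) ((n : ℝ) * x)
    have hx : (n : ℝ) * (x + 1) = (n : ℝ) * x + (n : ℤ) * (1 : ℝ) := by ring
    rw [hx, h]
  · intro x
    exact ((hlimm ((n : ℝ) * x)).comp hbB).const_mul _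
  · intro x
    simpa using ((hlimp ((n : ℝ) * x)).comp hbT).const_mul ((n : ℂ) ^ 2)
end
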